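/- Let R be the localization of the polynomial ring ℂ[X] at the prime ideal generated by X, and let M and N be R-modules. For an R-module P, let B(P) denote the submodule of elements annihilated by some power of X. Then in the tensor product M ⊗_R N one has B(M ⊗_R N) = Im(B(M) ⊗_R N → M ⊗_R N) + Im(M ⊗_R B(N) → M ⊗_R N), where the maps are induced by the inclusions B(M) ⊆ M and B(N) ⊆ N. -/

import Mathlib

noncomputable section

/-- The ideal `(X)` of `ℂ[X]`. -/
abbrev Pid : Ideal (Polynomial ℂ) := Ideal.span {Polynomial.X}

instance : Pid.IsPrime :=
  (Ideal.span_singleton_prime Polynomial.X_ne_zero).mpr Polynomial.prime_X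

/-- `R`, the localization of `ℂ[X]` at the prime ideal `(X)`. -/
abbrev Rloc : Type := Localization.AtPrime Pid

/-- The image of `X` in `R`. -/
def XR : Rloc := algebraMap (Polynomial ℂ) Rloc Polynomial.X

/-- For an `R`-module `P`, `B(P)` is the submodule of elements annihilated by
some power of `X`. -/
def Bmod (P : Type*) [AddCommGroup P] [Module Rloc P] : Submodule Rloc P where
  carrier := {z : P | ∃ m : ℕ, XR ^ m • z = 0}
  zero_mem' := ⟨0, by simp⟩
  add_mem' := by
    intro z w hz hw
    obtain ⟨n, hn⟩ := hz
    obtain ⟨m, hm⟩ := hw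
    refine ⟨max n m, ?_⟩
    have hz' : XR ^ max n m • z = 0 := by
      have h : XR ^ max n m = XR ^ (max n m - n) * XR ^ n := by
        rw [← pow_add]; congr 1; omega
      rw [h, mul_smul, hn, smul_zero]
    have hw' : XR ^ max n m • w = 0 := by
      have h : XR ^ max n m = XR ^ (max n m - m) * XR ^ m := by
        rw [← pow_add]; congr 1; omega
      rw [h, mul_smul, hm, smul_zero]
    rw [smul_add, hz', hw', add_zero]
  smul_mem' := by
    intro c z hz
    obtain ⟨m, hm⟩ := hz
    refine ⟨m, ?_⟩
    rw [smul_smul, mul_comm, ← smul_smul, hm, smul_zero]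

open TensorProduct LinearMap

instance : IsDiscreteValuationRing Rloc :=
  IsLocalization.AtPrime.isDiscreteValuationRing_of_dedekind_domain (Polynomial ℂ)
    (P := Pid) (by simp [Ideal.span_singleton_eq_bot, Polynomial.X_ne_zero]) Rloc

lemma XR_ne_zero : XR ≠ 0 := by
  have := IsLocalization.injective Rloc (Ideal.primeCompl_le_nonZeroDivisors Pid)
  simp [XR, map_eq_zero_iff _ this, Polynomial.X_ne_zero]

lemma XR_irreducible : Irreducible XR := by
  apply IsDiscreteValuationRing.irreducible_of_span_eq_maximalIdeal _ XR_ne_zero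
  rw [← Localization.AtPrime.map_eq_maximalIdeal, Ideal.map_span]
  simp [XR]

lemma smul_inj_of_Bmod_bot {P : Type*} [AddCommGroup P] [Module Rloc P]
    (h : Bmod P = ⊥) {r : Rloc} (hr : r ≠ 0) :
    Function.Injective (fun z : P => r • z) := by
  obtain ⟨n, u, rfl⟩ := IsDiscreteValuationRing.eq_unit_mul_pow_irreducible hr XR_irreducible
  intro a b hab
  simp only at hab
  have h2 : XR ^ n • (a - b) = 0 := by
    have : ((u : Rloc) * XR ^ n) • (a - b) = 0 := by
      rw [smul_sub, hab, sub_self]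
    calc XR ^ n • (a - b) = ((↑u⁻¹ * (↑u * XR ^ n)) : Rloc) • (a - b) := by
          rw [← mul_assoc, Units.inv_mul, one_mul]
      _ = (↑u⁻¹ : Rloc) • (((u : Rloc) * XR ^ n) • (a - b)) := by rw [mul_smul]
      _ = 0 := by rw [this, smul_zero]
  have : a - b ∈ Bmod P := ⟨n, h2⟩
  rw [h, Submodule.mem_bot] at this
  exact sub_eq_zero.mp this

lemma flat_of_Bmod_bot {P : Type*} [AddCommGroup P] [Module Rloc P]
    (h : Bmod P = ⊥) : Module.Flat Rloc P := by
  rw [Module.Flat.iff_rTensor_injective']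
  intro I
  obtain ⟨r, hr⟩ := (IsPrincipalIdealRing.principal I).principal
  by_cases hr0 : r = 0
  · subst hr0
    rw [Submodule.span_zero_singleton] at hr
    subst hr
    intro x y _
    have : Subsingleton ((⊥ : Ideal Rloc) ⊗[Rloc] P) := inferInstance
    exact Subsingleton.elim x y
  · -- e : Rloc →ₗ I, s ↦ s • r
    subst hr
    set I : Ideal Rloc := Ideal.span {r} with hI
    have hmem : ∀ s : Rloc, s * r ∈ I := fun s => Ideal.mem_span_singleton'.mpr ⟨s, rfl⟩
    let e : Rloc →ₗ[Rloc] I :=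
      { toFun := fun s => ⟨s * r, hmem s⟩
        map_add' := fun a b => by ext; simp [add_mul]
        map_smul' := fun a b => by ext; simp [mul_assoc] }
    have he : Function.Surjective e := by
      rintro ⟨x, hx⟩
      obtain ⟨s, hs⟩ := Ideal.mem_span_singleton'.mp hx
      exact ⟨s, by simp [e, hs]⟩
    have hesurj : Function.Surjective (rTensor P e) := rTensor_surjective P he
    have hcomp : (rTensor P I.subtype) ∘ₗ (rTensor P e) =
        (TensorProduct.lid Rloc P).symm.toLinearMap ∘ₗ
          (LinearMap.lsmul Rloc P r) ∘ₗ (TensorProduct.lid Rloc P).toLinearMap := by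
      apply TensorProduct.ext'
      intro s p
      simp only [coe_comp, Function.comp_apply, rTensor_tmul, Submodule.subtype_apply,
        LinearEquiv.coe_coe, TensorProduct.lid_tmul, lsmul_apply, LinearEquiv.coe_toLinearMap,
        TensorProduct.lid_symm_apply, coe_mk, AddHom.coe_mk, e, smul_smul,
        TensorProduct.tmul_smul, TensorProduct.smul_tmul', smul_eq_mul, mul_one]
      rw [mul_comm]
    have hinj : Function.Injective ((rTensor P I.subtype) ∘ₗ (rTensor P e)) := by
      rw [hcomp]
      intro x y hxy
      simp only [coe_comp, Function.comp_apply, LinearEquiv.coe_coe,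
        LinearEquiv.coe_toLinearMap, lsmul_apply] at hxy
      have h1 := (TensorProduct.lid Rloc P).symm.injective hxy
      have h2 := smul_inj_of_Bmod_bot h hr0 h1
      exact (TensorProduct.lid Rloc P).injective h2
    intro x y hxy
    obtain ⟨x', rfl⟩ := hesurj x
    obtain ⟨y', rfl⟩ := hesurj y
    exact congrArg _ (hinj (by simpa using hxy))

lemma Bmod_tensor_bot {M N : Type*} [AddCommGroup M] [Module Rloc M]
    [AddCommGroup N] [Module Rloc N] (hM : Bmod M = ⊥) (hN : Bmod N = ⊥) :
    Bmod (M ⊗[Rloc] N) = ⊥ := by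
  have : Module.Flat Rloc M := flat_of_Bmod_bot hM
  rw [eq_bot_iff]
  rintro w ⟨m, hm⟩
  have hXm : (XR : Rloc) ^ m ≠ 0 := pow_ne_zero _ XR_ne_zero
  have hNi : Function.Injective (LinearMap.lsmul Rloc N (XR ^ m)) :=
    smul_inj_of_Bmod_bot hN hXm
  have hti : Function.Injective (lTensor M (LinearMap.lsmul Rloc N (XR ^ m))) :=
    Module.Flat.lTensor_preserves_injective_linearMap _ hNi
  have hw : lTensor M (LinearMap.lsmul Rloc N (XR ^ m)) w = XR ^ m • w := by
    have : lTensor M (LinearMap.lsmul Rloc N (XR ^ m)) =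
        LinearMap.lsmul Rloc (M ⊗[Rloc] N) (XR ^ m) := by
      apply TensorProduct.ext'
      intro a b
      simp [TensorProduct.tmul_smul]
    rw [this]; rfl
  have : w = 0 := hti (by rw [hw, hm, map_zero])
  simp [this]

lemma Bmod_quot_bot (M : Type*) [AddCommGroup M] [Module Rloc M] :
    Bmod (M ⧸ (Bmod M)) = ⊥ := by
  rw [eq_bot_iff]
  rintro z ⟨m, hm⟩
  obtain ⟨x, rfl⟩ := Submodule.mkQ_surjective (Bmod M) z
  rw [← map_smul, Submodule.mkQ_apply, Submodule.Quotient.mk_eq_zero] at hm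
  obtain ⟨k, hk⟩ := hm
  have : x ∈ Bmod M := ⟨k + m, by rw [pow_add, mul_smul]; exact hk⟩
  simpa [Submodule.Quotient.mk_eq_zero] using this

lemma ker_map_mkQ {R : Type*} [CommRing R] {M N : Type*} [AddCommGroup M] [Module R M]
    [AddCommGroup N] [Module R N] (p : Submodule R M) (q : Submodule R N) :
    LinearMap.ker (TensorProduct.map p.mkQ q.mkQ) =
      LinearMap.range (TensorProduct.map p.subtype (LinearMap.id : N →ₗ[R] N)) ⊔
      LinearMap.range (TensorProduct.map (LinearMap.id : M →ₗ[R] M) q.subtype) := by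
  rw [TensorProduct.map_ker (LinearMap.exact_subtype_mkQ p) (Submodule.mkQ_surjective _)
      (LinearMap.exact_subtype_mkQ q) (Submodule.mkQ_surjective _), sup_comm]
  rfl


/-- For `R`-modules `M`, `N` one has
`B(M ⊗_R N) = Im(B(M) ⊗_R N → M ⊗_R N) + Im(M ⊗_R B(N) → M ⊗_R N)`. -/
theorem Bmod_tensorProduct
    (M N : Type*) [AddCommGroup M] [Module Rloc M] [AddCommGroup N] [Module Rloc N] :
    Bmod (TensorProduct Rloc M N) =
      LinearMap.range (TensorProduct.map (Bmod M).subtype (LinearMap.id : N →ₗ[Rloc] N)) ⊔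
      LinearMap.range (TensorProduct.map (LinearMap.id : M →ₗ[Rloc] M) (Bmod N).subtype) := by
  have hker := ker_map_mkQ (Bmod M) (Bmod N)
  apply le_antisymm
  · intro z hz
    obtain ⟨m, hm⟩ := hz
    rw [← hker]
    have h0 : Bmod ((M ⧸ Bmod M) ⊗[Rloc] (N ⧸ Bmod N)) = ⊥ :=
      Bmod_tensor_bot (Bmod_quot_bot M) (Bmod_quot_bot N)
    have hmem : TensorProduct.map (Bmod M).mkQ (Bmod N).mkQ z ∈
        Bmod ((M ⧸ Bmod M) ⊗[Rloc] (N ⧸ Bmod N)) :=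
      ⟨m, by rw [← map_smul, hm, map_zero]⟩
    rw [h0, Submodule.mem_bot] at hmem
    exact hmem
  · apply sup_le
    · rw [TensorProduct.range_map_eq_span_tmul]
      apply Submodule.span_le.mpr
      rintro _ ⟨b, n, rfl⟩
      obtain ⟨m, hm⟩ := b.2
      refine ⟨m, ?_⟩
      simp only [Submodule.subtype_apply, id_coe, id_eq]
      rw [TensorProduct.smul_tmul', hm, TensorProduct.zero_tmul]
    · rw [TensorProduct.range_map_eq_span_tmul]
      apply Submodule.span_le.mpr
      rintro _ ⟨a, c, rfl⟩
      obtain ⟨m, hm⟩ := c.2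
      refine ⟨m, ?_⟩
      simp only [Submodule.subtype_apply, id_coe, id_eq]
      rw [← TensorProduct.tmul_smul, hm, TensorProduct.tmul_zero]

end
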